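/- Let α > 0, x ∈ ℝ, t > 0 with x/t ≥ 1/(12α). For every real l ≤ 0 and k = −2/3 + l·e^{iπ/6} one has Re(Φ(k) − Φ(−2/3)) = −l³/(64α²) − (l/(8α))·(x/t − 1/(12α)), and consequently Re(Φ(k) − Φ(−2/3)) ≥ |k + 2/3|³/(64α²) ≥ 0 and exp(−(3/4)·t·Re(Φ(k) − Φ(−2/3))) ≤ exp(−2|z|³), where z = (1/8)·(3/α²)^{1/3}·(k + 2/3)·t^{1/3}. -/

import Mathlib

open Complex

/-- The phase function Φ(k) = (i/(4α))·[(x/t)·k + (1/(16α))·(k³ + 2k²)]. -/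
noncomputable def Phi (α x t : ℝ) (k : ℂ) : ℂ :=
  (Complex.I / (4 * (α : ℂ))) *
    (((x / t : ℝ) : ℂ) * k + (1 / (16 * (α : ℂ))) * (k ^ 3 + 2 * k ^ 2))

lemma phi_key (α x t l : ℝ) (hα : α ≠ 0) (e : ℂ) (he3 : e^3 = Complex.I) :
    Phi α x t (-2/3 + (l:ℂ) * e) - Phi α x t (-2/3) =
      (((x/t - 1/(12*α)) * l / (4*α) : ℝ) : ℂ) * (Complex.I * e)
        + ((-l^3/(64*α^2) : ℝ) : ℂ) := by
  have hα' : (α:ℂ) ≠ 0 := by exact_mod_cast hα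
  simp only [Phi]
  push_cast
  field_simp
  linear_combination (↑l^3 * Complex.I * 20736) * he3 + (↑l^3 * 20736) * Complex.I_sq

theorem stmt_5 (α x t : ℝ) (hα : 0 < α) (ht : 0 < t) (hxt : 1 / (12 * α) ≤ x / t)
    (l : ℝ) (hl : l ≤ 0) (k : ℂ)
    (hk : k = -2/3 + (l : ℂ) * Complex.exp (Complex.I * (Real.pi / 6))) :
    (Phi α x t k - Phi α x t (-2/3)).re =
        -l ^ 3 / (64 * α ^ 2) - (l / (8 * α)) * (x / t - 1 / (12 * α)) ∧
      (Phi α x t k - Phi α x t (-2/3)).re ≥ ‖k + 2/3‖ ^ 3 / (64 * α ^ 2) ∧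
      ‖k + 2/3‖ ^ 3 / (64 * α ^ 2) ≥ 0 ∧
      Real.exp (-(3/4) * t * (Phi α x t k - Phi α x t (-2/3)).re) ≤
        Real.exp (-2 * ‖
          ((((1:ℝ)/8 * (3 / α ^ 2) ^ ((1:ℝ)/3) * t ^ ((1:ℝ)/3) : ℝ) : ℂ) * (k + 2/3))‖ ^ 3) := by
  set e : ℂ := Complex.exp (Complex.I * (Real.pi / 6)) with he_def
  have he3 : e ^ 3 = Complex.I := by
    rw [he_def, ← Complex.exp_nat_mul]
    have h : ((3:ℕ):ℂ) * (Complex.I * ((Real.pi:ℂ)/6)) = (Real.pi/2 : ℝ) * Complex.I := by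
      push_cast; ring
    rw [h, Complex.exp_mul_I]
    simp
  have heim : e.im = 1/2 := by
    rw [he_def, show (Complex.I * ((Real.pi:ℂ)/6)) = (Real.pi/6 : ℝ) * Complex.I by
      push_cast; ring, Complex.exp_ofReal_mul_I_im, Real.sin_pi_div_six]
  have ht' : t ≠ 0 := ne_of_gt ht
  have hα' : α ≠ 0 := ne_of_gt hα
  set c : ℝ := x/t - 1/(12*α) with hc_def
  have hc : 0 ≤ c := sub_nonneg.2 hxt
  have key := phi_key α x t l (ne_of_gt hα) e he3
  rw [← hk] at key
  have hre : (Phi α x t k - Phi α x t (-2/3)).re =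
      -l ^ 3 / (64 * α ^ 2) - (l / (8 * α)) * c := by
    rw [key]
    simp only [Complex.add_re, Complex.mul_re, Complex.mul_im, Complex.ofReal_re,
      Complex.ofReal_im, Complex.I_re, Complex.I_im, heim]
    ring
  have hke : k + 2/3 = (l:ℂ) * e := by rw [hk]; ring
  have habs : ‖k + 2/3‖ = -l := by
    rw [hke, norm_mul, Complex.norm_real, Real.norm_eq_abs, abs_of_nonpos hl, he_def, Complex.norm_exp]
    simp
  refine ⟨hre, ?_, ?_, ?_⟩
  · rw [hre, habs]
    have h2 : 0 ≤ (-l * c) / (8 * α) := div_nonneg (mul_nonneg (neg_nonneg.2 hl) hc) (by linarith)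
    have h3 : -l ^ 3 / (64 * α ^ 2) - l / (8 * α) * c - (-l) ^ 3 / (64 * α ^ 2) = (-l * c) / (8 * α) := by
      ring
    linarith
  · rw [habs]
    exact div_nonneg (pow_nonneg (neg_nonneg.2 hl) 3) (by positivity)
  · apply Real.exp_le_exp.2
    set c0 : ℝ := (1:ℝ)/8 * (3 / α ^ 2) ^ ((1:ℝ)/3) * t ^ ((1:ℝ)/3) with hc0_def
    have hc0nn : 0 ≤ c0 := by
      apply mul_nonneg (mul_nonneg (by norm_num) (Real.rpow_nonneg (by positivity) _))
      exact Real.rpow_nonneg ht.le _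
    have hc03 : c0 ^ 3 = 3 / α ^ 2 * t / 512 := by
      rw [hc0_def]
      have h1 : ((3 / α ^ 2 : ℝ) ^ ((1:ℝ)/3)) ^ 3 = 3 / α ^ 2 := by
        rw [← Real.rpow_natCast ((3 / α ^ 2 : ℝ) ^ ((1:ℝ)/3)) 3,
          ← Real.rpow_mul (by positivity)]
        norm_num
      have h2 : ((t : ℝ) ^ ((1:ℝ)/3)) ^ 3 = t := by
        rw [← Real.rpow_natCast ((t:ℝ) ^ ((1:ℝ)/3)) 3, ← Real.rpow_mul ht.le]
        norm_num
      rw [mul_pow, mul_pow, h1, h2]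
      ring
    have habs2 : ‖(c0 : ℂ) * (k + 2/3)‖ = c0 * (-l) := by
      rw [norm_mul, Complex.norm_real, Real.norm_eq_abs, _root_.abs_of_nonneg hc0nn, habs]
    rw [habs2, hre]
    have expand : -(3/4)*t*(-l^3/(64*α^2) - l/(8*α)*c) =
        -2*(c0*(-l))^3 + (3/32)*(t*l*c/α) := by
      rw [mul_pow, hc03]
      field_simp
      ring
    rw [expand]
    have : (3/32)*(t*l*c/α) ≤ 0 := by
      apply mul_nonpos_of_nonneg_of_nonpos (by norm_num)
      apply div_nonpos_of_nonpos_of_nonneg _ hα.le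
      exact mul_nonpos_of_nonpos_of_nonneg (mul_nonpos_of_nonneg_of_nonpos ht.le hl) hc
    linarith
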